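/- Let s be a natural number, let v : {1,…,s+1} → ℝ and α : {1,…,s+1} × {1,…,s+1} → ℝ satisfy v_i ≥ 0, α_{ij} ≥ 0 (for j < i) and v_i + Σ_{j<i} α_{ij} = 1 for every i. Let b ≥ 0, c ≥ 0, T ≥ 0, h > 0 with h·(T + c) ≤ 1 and h·b ≤ 1, and let S⁰ ≥ 0, I⁰ ≥ 0, R⁰ ≥ 0 be real numbers. Define stage values by S_(i) = v_i·S⁰ + Σ_{j<i} α_{ij}·(S_(j) − h·(S_(j)·T + c·S_(j))), I_(i) = v_i·I⁰ + Σ_{j<i} α_{ij}·(I_(j) + h·(S_(j)·T − b·I_(j))), R_(i) = v_i·R⁰ + Σ_{j<i} α_{ij}·(R_(j) + h·(b·I_(j) + c·S_(j))) for i = 1,…,s+1. Then S_(i) ≥ 0, I_(i) ≥ 0 and R_(i) ≥ 0 for every i ∈ {1,…,s+1}. -/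
import Mathlib


theorem stmt_13 (s : ℕ) (v : Fin (s + 1) → ℝ) (α : Fin (s + 1) → Fin (s + 1) → ℝ)
    (hv : ∀ i, 0 ≤ v i) (hα : ∀ i j, j < i → 0 ≤ α i j)
    (hcons : ∀ i, v i + ∑ j ∈ Finset.Iio i, α i j = 1)
    (b c T h : ℝ) (hb : 0 ≤ b) (hc : 0 ≤ c) (hT : 0 ≤ T) (hh : 0 < h)
    (hcond1 : h * (T + c) ≤ 1) (hcond2 : h * b ≤ 1)
    (S₀ I₀ R₀ : ℝ) (hS₀ : 0 ≤ S₀) (hI₀ : 0 ≤ I₀) (hR₀ : 0 ≤ R₀)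
    (S I R : Fin (s + 1) → ℝ)
    (hS : ∀ i, S i = v i * S₀ +
      ∑ j ∈ Finset.Iio i, α i j * (S j - h * (S j * T + c * S j)))
    (hI : ∀ i, I i = v i * I₀ +
      ∑ j ∈ Finset.Iio i, α i j * (I j + h * (S j * T - b * I j)))
    (hR : ∀ i, R i = v i * R₀ +
      ∑ j ∈ Finset.Iio i, α i j * (R j + h * (b * I j + c * S j))) :
    ∀ i, 0 ≤ S i ∧ 0 ≤ I i ∧ 0 ≤ R i := by
  have main : ∀ n : ℕ, ∀ i : Fin (s + 1), (i : ℕ) < n → 0 ≤ S i ∧ 0 ≤ I i ∧ 0 ≤ R i := by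
    intro n
    induction n with
    | zero => exact fun i h => absurd h (Nat.not_lt_zero _)
    | succ n ih =>
      intro i hi
      have key : ∀ j ∈ Finset.Iio i, 0 ≤ S j ∧ 0 ≤ I j ∧ 0 ≤ R j := by
        intro j hj
        have hji : j < i := Finset.mem_Iio.mp hj
        exact ih j (by omega)
      refine ⟨?_, ?_, ?_⟩
      · rw [hS i]
        refine add_nonneg (mul_nonneg (hv i) hS₀) (Finset.sum_nonneg fun j hj => ?_)
        obtain ⟨hSj, hIj, hRj⟩ := key j hj
        refine mul_nonneg (hα i j (Finset.mem_Iio.mp hj)) ?_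
        nlinarith [mul_nonneg (sub_nonneg.mpr hcond1) hSj]
      · rw [hI i]
        refine add_nonneg (mul_nonneg (hv i) hI₀) (Finset.sum_nonneg fun j hj => ?_)
        obtain ⟨hSj, hIj, hRj⟩ := key j hj
        refine mul_nonneg (hα i j (Finset.mem_Iio.mp hj)) ?_
        nlinarith [mul_nonneg (sub_nonneg.mpr hcond2) hIj, mul_nonneg (mul_nonneg hh.le hSj) hT]
      · rw [hR i]
        refine add_nonneg (mul_nonneg (hv i) hR₀) (Finset.sum_nonneg fun j hj => ?_)
        obtain ⟨hSj, hIj, hRj⟩ := key j hj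
        refine mul_nonneg (hα i j (Finset.mem_Iio.mp hj)) ?_
        have := mul_nonneg hh.le (add_nonneg (mul_nonneg hb hIj) (mul_nonneg hc hSj))
        linarith
  exact fun i => main (i + 1) i (Nat.lt_succ_self _)
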